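/- Suppose the defense policy π_D satisfies Γ^{s;a}(π_D) ≥ Γ^{s;a}(π†) for all (s,a) ∈ Θ^{ε†} and additionally ρ̂^{π_D} = ρ̂^{π†} (zero poisoned-score gap, Δ̂ = 0). If furthermore R̄ = R̂ + Σ α_{s,a}(ψ^{π{s;a}} - ψ^{π†}) with α ≥ 0, then ρ̄^{π_D} ≥ ρ̄^{π†}, i.e., the attack influence of the defense is no larger than that of the target policy: Δ^{π_D} ≤ Δ^{π†}. -/

import Mathlib

open scoped BigOperators

/-- Inner product on ℝ^n. -/
def dotv {n : ℕ} (x y : Fin n → ℝ) : ℝ := ∑ j, x j * y j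

lemma dotv_comm {n : ℕ} (x y : Fin n → ℝ) : dotv x y = dotv y x := by
  simp [dotv, mul_comm]

lemma dotv_add_right {n : ℕ} (x y z : Fin n → ℝ) :
    dotv x (y + z) = dotv x y + dotv x z := by
  simp [dotv, mul_add, Finset.sum_add_distrib]

lemma dotv_sum_right {n : ℕ} {ι : Type} (Θ : Finset ι) (x : Fin n → ℝ)
    (f : ι → Fin n → ℝ) : dotv x (∑ i ∈ Θ, f i) = ∑ i ∈ Θ, dotv x (f i) := by
  classical
  induction Θ using Finset.induction with
  | empty => simp [dotv]
  | insert _ _ h ih => simp [Finset.sum_insert h, dotv_add_right, ih]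

lemma dotv_smul_right {n : ℕ} (c : ℝ) (x y : Fin n → ℝ) :
    dotv x (c • y) = c * dotv x y := by
  simp only [dotv, Finset.mul_sum, Pi.smul_apply, smul_eq_mul]
  exact Finset.sum_congr rfl fun i _ => by ring

/-- if `Γ^{i}(π_D) ≥ Γ^{i}(π†)` on the tight set and the poisoned-score
gap is zero, then `ρ̄^{π_D} ≥ ρ̄^{π†}`, i.e. `Δ^{π_D} ≤ Δ^{π†}`. -/
theorem defense_influence_le_target {n : ℕ} {ι : Type} (Θ : Finset ι)
    (ψt ψD ψstar Rhat Rbar : Fin n → ℝ) (ψn : ι → Fin n → ℝ) (α : ι → ℝ)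
    (hα : ∀ i ∈ Θ, 0 ≤ α i)
    (hR : Rbar = Rhat + ∑ i ∈ Θ, α i • (ψn i - ψt))
    (hΓ : ∀ i ∈ Θ, dotv (ψn i - ψt) ψt ≤ dotv (ψn i - ψt) ψD)
    (hgap : dotv ψD Rhat = dotv ψt Rhat) :
    dotv ψt Rbar ≤ dotv ψD Rbar ∧
      dotv ψstar Rbar - dotv ψD Rbar ≤ dotv ψstar Rbar - dotv ψt Rbar := by
  have key : dotv ψt Rbar ≤ dotv ψD Rbar := by
    subst hR
    rw [dotv_add_right, dotv_add_right, dotv_sum_right, dotv_sum_right, hgap]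
    gcongr with i hi
    rw [dotv_smul_right, dotv_smul_right]
    have := hΓ i hi
    rw [dotv_comm (ψn i - ψt) ψt, dotv_comm (ψn i - ψt) ψD] at this
    exact mul_le_mul_of_nonneg_left this (hα i hi)
  exact ⟨key, by linarith⟩
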